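/- Let {A,B} be a k-irreducible pair with ΣA = ΣB, a ∈ A with a = max(A ∪ B), b ∈ B, a > b, and suppose the multiplicity of b in B is strictly greater than the multiplicity x of a in A. Then the pair {C,D}, obtained by replacing all x copies of a in A by x copies of a − b and deleting x copies of b from B, is k-irreducible. -/

import Mathlib

/-- `{A,B}` is an irreducible pair: nonempty multisets of positive integers with equal
sums such that no nonempty proper submultisets `A' < A`, `B' < B` have equal sums. -/
def IrredPair (A B : Multiset ℕ) : Prop :=
  A ≠ 0 ∧ B ≠ 0 ∧ (∀ x ∈ A, 0 < x) ∧ (∀ x ∈ B, 0 < x) ∧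
  A.sum = B.sum ∧
  ∀ A' B' : Multiset ℕ, A' < A → B' < B → A' ≠ 0 → B' ≠ 0 → A'.sum ≠ B'.sum

/-- `{A,B}` is a `k`-irreducible pair: irreducible and all elements are at most `k`. -/
def KIrredPair (k : ℕ) (A B : Multiset ℕ) : Prop :=
  IrredPair A B ∧ (∀ x ∈ A, x ≤ k) ∧ (∀ x ∈ B, x ≤ k)

/-- Maximum element of a multiset of naturals (0 for the empty multiset). -/
def msetMax (S : Multiset ℕ) : ℕ := S.fold max 0

/-- A zero-sum multiset of integers is irreducible if it has no proper nonempty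
zero-sum submultiset. -/
def IrredZeroSum (S : Multiset ℤ) : Prop :=
  ¬ ∃ T : Multiset ℤ, T ≤ S ∧ T ≠ 0 ∧ T ≠ S ∧ T.sum = 0

theorem stmt13 (k : ℕ) (A B : Multiset ℕ) (h : KIrredPair k A B)
    (a b : ℕ) (ha : a ∈ A) (hmax : a = msetMax (A + B)) (hb : b ∈ B) (hab : a > b)
    (hcount : A.count a < B.count b) :
    KIrredPair k (A.filter (fun x => x ≠ a) + Multiset.replicate (A.count a) (a - b))
      (B - Multiset.replicate (A.count a) b) := by
  obtain ⟨⟨hA0, hB0, hApos, hBpos, hsum, hirr⟩, hAk, hBk⟩ := h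
  set x := A.count a with hxdef
  set F := A.filter (fun y => y ≠ a) with hFdef
  set C := F + Multiset.replicate x (a - b) with hCdef
  set D := B - Multiset.replicate x b with hDdef
  have hx1 : 1 ≤ x := Multiset.one_le_count_iff_mem.mpr ha
  have hrb : Multiset.replicate x b ≤ B := Multiset.le_count_iff_replicate_le.mp hcount.le
  have hFA : F + Multiset.replicate x a = A := by
    rw [hFdef, hxdef]
    ext y
    by_cases hy : y = a
    · simp [Multiset.count_filter, Multiset.count_replicate, hy]
    · simp only [Multiset.count_add, Multiset.count_filter, Multiset.count_replicate]
      rw [if_pos hy, if_neg (fun h => hy h.symm)]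
      simp
  have hFa : F.count a = 0 := by
    simp [hFdef, Multiset.count_filter]
  have hDB : D + Multiset.replicate x b = B := tsub_add_cancel_of_le hrb
  have hsub : a - b + b = a := Nat.sub_add_cancel hab.le
  have hAsum : F.sum + x * a = A.sum := by
    conv_rhs => rw [← hFA]
    simp [Multiset.sum_replicate]
  have hBsum : D.sum + x * b = B.sum := by
    conv_rhs => rw [← hDB]
    simp [Multiset.sum_replicate]
  have hCsum : C.sum = F.sum + x * (a - b) := by
    simp [hCdef, Multiset.sum_replicate]
  have hxab : x * (a - b) + x * b = x * a := by rw [← Nat.left_distrib, hsub]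
  have hCD : C.sum = D.sum := by
    have h1 : C.sum + x * b = D.sum + x * b := by
      rw [hCsum, hBsum, ← hsum, ← hAsum]; omega
    omega
  refine ⟨⟨?_, ?_, ?_, ?_, hCD, ?_⟩, ?_, ?_⟩
  · -- C ≠ 0
    have hmem : a - b ∈ C := by
      rw [hCdef]
      exact Multiset.mem_add.mpr (Or.inr (Multiset.mem_replicate.mpr ⟨by omega, rfl⟩))
    exact fun h0 => by simp [h0] at hmem
  · -- D ≠ 0
    have hmem : b ∈ D := by
      rw [← Multiset.count_pos, hDdef, Multiset.count_sub, Multiset.count_replicate, if_pos rfl]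
      omega
    exact fun h0 => by simp [h0] at hmem
  · -- positivity C
    intro y hy
    rcases Multiset.mem_add.mp hy with hy | hy
    · exact hApos y (Multiset.mem_of_mem_filter hy)
    · rw [Multiset.eq_of_mem_replicate hy]; omega
  · -- positivity D
    intro y hy
    exact hBpos y (Multiset.mem_of_le (Multiset.sub_le_self _ _) hy)
  · -- irreducibility
    intro C' D' hC' hD' hC'0 hD'0 heq
    set C₁ := C' ∩ F with hC1def
    set C₂ := C' - C₁ with hC2def
    have hC1F : C₁ ≤ F := Multiset.inter_le_right
    have hC1C' : C₁ ≤ C' := Multiset.inter_le_left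
    have hsplit : C₁ + C₂ = C' := add_tsub_cancel_of_le hC1C'
    have hC2R : C₂ ≤ Multiset.replicate x (a - b) := by
      rw [Multiset.le_iff_count]
      intro y
      have hcc : C'.count y ≤ F.count y + (Multiset.replicate x (a - b)).count y := by
        have h2 := Multiset.count_le_of_le y hC'.le
        simpa [hCdef, Multiset.count_add] using h2
      rw [hC2def, Multiset.count_sub, hC1def, Multiset.count_inter]
      omega
    set j := Multiset.card C₂ with hjdef
    have hC2rep : C₂ = Multiset.replicate j (a - b) :=
      Multiset.eq_replicate_card.mpr
        (fun y hy => Multiset.eq_of_mem_replicate (Multiset.mem_of_le hC2R hy))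
    have hjx : j ≤ x := by
      have h2 := Multiset.card_le_card hC2R
      simpa using h2
    set A' := C₁ + Multiset.replicate j a with hA'def
    set B' := D' + Multiset.replicate j b with hB'def
    have hC1a : C₁.count a = 0 :=
      Nat.le_zero.mp (hFa ▸ Multiset.count_le_of_le a hC1F)
    have hA'le : A' ≤ A := by
      rw [← hFA]
      exact add_le_add hC1F ((Multiset.replicate_le_replicate a).mpr hjx)
    have hA'lt : A' < A := by
      refine lt_of_le_of_ne hA'le (fun hEq => ?_)
      have h1 : A.count a = C₁.count a + j := by
        rw [← hEq, hA'def]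
        simp [Multiset.count_add, Multiset.count_replicate]
      have hja : j = x := by omega
      have hcard : Multiset.card C₁ = Multiset.card F := by
        have h2 := congrArg Multiset.card hEq
        rw [hA'def] at h2
        conv_rhs at h2 => rw [← hFA]
        simp only [Multiset.card_add, Multiset.card_replicate, hja] at h2
        omega
      have hC1eq : C₁ = F := Multiset.eq_of_le_of_card_le hC1F (le_of_eq hcard.symm)
      exact hC'.ne (by rw [← hsplit, hC2rep, hC1eq, hja, hCdef])
    have hB'le : B' ≤ B := by
      rw [← hDB]
      exact add_le_add hD'.le ((Multiset.replicate_le_replicate b).mpr hjx)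
    have hB'lt : B' < B := by
      refine lt_of_le_of_ne hB'le (fun hEq => ?_)
      have hcD : Multiset.card D' ≤ Multiset.card D := Multiset.card_le_card hD'.le
      have h1 : Multiset.card D' + j = Multiset.card D + x := by
        have h2 := congrArg Multiset.card hEq
        rw [hB'def] at h2
        conv_rhs at h2 => rw [← hDB]
        simpa using h2
      have hja : j = x := by omega
      have hD'eq : D' = D := by
        have h3 : D' + Multiset.replicate x b = D + Multiset.replicate x b := by
          rw [hDB, ← hja, ← hB'def, hEq]
        exact add_right_cancel h3
      exact hD'.ne hD'eq
    have hA'0 : A' ≠ 0 := by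
      intro h0
      have h1 : Multiset.card C₁ + j = 0 := by
        have h2 := congrArg Multiset.card h0
        simpa [hA'def] using h2
      have h3 : Multiset.card C₁ + Multiset.card C₂ = Multiset.card C' := by
        rw [← hsplit]; simp
      have h4 : Multiset.card C' = 0 := by omega
      exact hC'0 (Multiset.card_eq_zero.mp h4)
    have hB'0 : B' ≠ 0 := fun h0 =>
      hD'0 (Multiset.le_zero.mp (h0 ▸ Multiset.le_add_right D' _))
    have hsA' : A'.sum = C'.sum + j * b := by
      rw [hA'def, ← hsplit, hC2rep]
      simp only [Multiset.sum_add, Multiset.sum_replicate, smul_eq_mul]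
      have hjab : j * (a - b) + j * b = j * a := by rw [← Nat.left_distrib, hsub]
      omega
    have hsB' : B'.sum = D'.sum + j * b := by
      simp [hB'def, Multiset.sum_replicate]
    exact hirr A' B' hA'lt hB'lt hA'0 hB'0 (by rw [hsA', hsB', heq])
  · -- bound C
    intro y hy
    rcases Multiset.mem_add.mp hy with hy | hy
    · exact hAk y (Multiset.mem_of_mem_filter hy)
    · rw [Multiset.eq_of_mem_replicate hy]
      have := hAk a ha
      omega
  · -- bound D
    intro y hy
    exact hBk y (Multiset.mem_of_le (Multiset.sub_le_self _ _) hy)
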